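/- Key identity for the BI model: let the true p-values be i.i.d. uniform(0,1), independent of the false p-values, with N = n₀ true hypotheses, and consider the step-up test with deterministic critical values 0 < α_{1:n} ≤ … ≤ α_{n:n} < 1. Set γ(i) = n·α_{i:n} for i ≥ 1 and γ(0) = n·α_{1:n}. Then E(V/γ(R)) = n₀/n. -/

import Mathlib

open MeasureTheory ProbabilityTheory Finset
open scoped Classical

/-- Number of rejections `R` of the step-up test with critical values `αc 1 ≤ … ≤ αc n`:
`R = max{i ∈ {1,…,n} : p_{i:n} ≤ αc i} = max{i : #{j : p_j ≤ αc i} ≥ i}` (`0` if empty). -/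
noncomputable def numRej {Ω ι : Type*} [Fintype ι] (n : ℕ) (αc : ℕ → ℝ)
    (q : ι → Ω → ℝ) (ω : Ω) : ℕ :=
  ((Finset.Icc 1 n).filter fun i =>
    i ≤ (Finset.univ.filter fun j => q j ω ≤ αc i).card).sup id

/-- Number `V` of falsely rejected true hypotheses: true `p`-values `≤ αc (max R 1)`
(with the convention `α_{0:n} = α_{1:n}`). -/
noncomputable def numFalseRej {Ω ι : Type*} [Fintype ι] (n : ℕ) (αc : ℕ → ℝ)
    (q : ι → Ω → ℝ) (T : Finset ι) (ω : Ω) : ℕ :=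
  (T.filter fun j => q j ω ≤ αc (max (numRej n αc q ω) 1)).card

lemma sup_id_mem {s : Finset ℕ} (hs : s.Nonempty) : s.sup id ∈ s := by
  rw [← Finset.sup'_eq_sup hs]
  have : s.max' hs ∈ s := Finset.max'_mem s hs
  simpa [Finset.max'] using this

lemma filter_sup_id (s : Finset ℕ) (p : ℕ → Prop) [DecidablePred p] :
    (s.filter p).sup id = s.sup (fun i => if p i then i else 0) := by
  apply le_antisymm
  · refine Finset.sup_le fun i hi => ?_
    rcases Finset.mem_filter.1 hi with ⟨h1, h2⟩
    have h3 : (if p i then i else 0) ≤ s.sup (fun i => if p i then i else 0) :=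
      Finset.le_sup (f := fun i => if p i then i else 0) h1
    simpa [h2] using h3
  · refine Finset.sup_le fun i hi => ?_
    by_cases h : p i
    · simpa [h] using Finset.le_sup (f := id) (Finset.mem_filter.2 ⟨hi, h⟩)
    · simp [h]

lemma measurable_nat_max {Ω : Type*} {m : MeasurableSpace Ω} {f g : Ω → ℕ}
    (hf : Measurable f) (hg : Measurable g) : Measurable (fun ω => max (f ω) (g ω)) :=
  (measurable_of_countable (fun p : ℕ × ℕ => max p.1 p.2)).comp (hf.prodMk hg)

lemma measurable_finset_sup {Ω : Type*} {m : MeasurableSpace Ω} (s : Finset ℕ) (f : ℕ → Ω → ℕ)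
    (hf : ∀ i, Measurable (f i)) : Measurable (fun ω => s.sup (fun i => f i ω)) := by
  induction s using Finset.induction_on with
  | empty => simp only [Finset.sup_empty]; exact measurable_const
  | insert _ _ h ih =>
      simp only [Finset.sup_insert]
      exact measurable_nat_max (hf _) ih

lemma measurable_cnt {Ω ι : Type*} [Fintype ι] {m : MeasurableSpace Ω} (a : ℝ)
    (q : ι → Ω → ℝ) (hq : ∀ j, Measurable (q j)) :
    Measurable (fun ω => (Finset.univ.filter fun j => q j ω ≤ a).card) := by
  simp only [Finset.card_filter]
  refine Finset.measurable_sum _ fun j _ => Measurable.ite ?_ measurable_const measurable_const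
  exact (hq j) measurableSet_Iic

section det
variable {Ω : Type*} {n : ℕ} {αc : ℕ → ℝ} {q : Fin n → Ω → ℝ} {ω : Ω}

lemma numRej_le : numRej n αc q ω ≤ n :=
  Finset.sup_le fun i hi => (Finset.mem_Icc.1 (Finset.mem_filter.1 hi).1).2

lemma le_numRej {i : ℕ} (hi : i ∈ Finset.Icc 1 n)
    (h : i ≤ (Finset.univ.filter fun j => q j ω ≤ αc i).card) : i ≤ numRej n αc q ω :=
  Finset.le_sup (f := id) (Finset.mem_filter.2 ⟨hi, h⟩)

lemma numRej_spec (h : numRej n αc q ω ≠ 0) :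
    numRej n αc q ω ∈ Finset.Icc 1 n ∧
      numRej n αc q ω ≤
        (Finset.univ.filter fun j => q j ω ≤ αc (numRej n αc q ω)).card := by
  set s := (Finset.Icc 1 n).filter fun i =>
    i ≤ (Finset.univ.filter fun j => q j ω ≤ αc i).card with hs
  have hne : s.Nonempty := by
    by_contra hc
    rw [Finset.not_nonempty_iff_eq_empty] at hc
    exact h (by simp [numRej, ← hs, hc])
  have hmem : s.sup id ∈ s := sup_id_mem hne
  have : numRej n αc q ω = s.sup id := rfl
  rw [this]
  exact ⟨(Finset.mem_filter.1 hmem).1, (Finset.mem_filter.1 hmem).2⟩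

lemma one_le_numRej_update (hn : 0 < n) (hpos : 0 < αc 1) (j : Fin n) :
    1 ≤ numRej n αc (Function.update q j fun _ => 0) ω := by
  refine le_numRej (Finset.mem_Icc.2 ⟨le_rfl, hn⟩) ?_
  refine Finset.card_pos.2 ⟨j, Finset.mem_filter.2 ⟨Finset.mem_univ _, ?_⟩⟩
  simp [Function.update_self]
  exact hpos.le

lemma cnt_update_ge {j : Fin n} {a : ℝ} (ha : 0 ≤ a) :
    (Finset.univ.filter fun k => q k ω ≤ a).card ≤
      (Finset.univ.filter fun k => Function.update q j (fun _ => 0) k ω ≤ a).card := by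
  refine Finset.card_le_card fun k hk => Finset.mem_filter.2 ⟨Finset.mem_univ _, ?_⟩
  rcases eq_or_ne k j with rfl | h
  · simpa [Function.update_self] using ha
  · rw [Function.update_of_ne h]
    exact (Finset.mem_filter.1 hk).2

lemma cnt_update_eq {j : Fin n} {a : ℝ} (ha : 0 ≤ a) (hja : q j ω ≤ a) :
    (Finset.univ.filter fun k => Function.update q j (fun _ => 0) k ω ≤ a) =
      (Finset.univ.filter fun k => q k ω ≤ a) := by
  refine Finset.filter_congr fun k _ => ?_
  rcases eq_or_ne k j with rfl | h
  · simp [Function.update_self, ha, hja]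
  · rw [Function.update_of_ne h]

lemma numRej_le_update (hpos : 0 < αc 1)
    (hmono : ∀ i j, 1 ≤ i → i ≤ j → j ≤ n → αc i ≤ αc j) (j : Fin n) :
    numRej n αc q ω ≤ numRej n αc (Function.update q j fun _ => 0) ω := by
  refine Finset.sup_le fun i hi => ?_
  rcases Finset.mem_filter.1 hi with ⟨h1, h2⟩
  rcases Finset.mem_Icc.1 h1 with ⟨h3, h4⟩
  have ha : (0:ℝ) ≤ αc i := le_trans hpos.le (hmono 1 i le_rfl h3 h4)
  exact le_numRej h1 (le_trans h2 (cnt_update_ge ha))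

lemma key_update (hn : 0 < n) (hpos : 0 < αc 1)
    (hmono : ∀ i j, 1 ≤ i → i ≤ j → j ≤ n → αc i ≤ αc j) (j : Fin n) :
    ((q j ω ≤ αc (max (numRej n αc q ω) 1)) ↔
      (q j ω ≤ αc (numRej n αc (Function.update q j fun _ => 0) ω))) ∧
    ((q j ω ≤ αc (numRej n αc (Function.update q j fun _ => 0) ω)) →
      numRej n αc (Function.update q j fun _ => 0) ω = max (numRej n αc q ω) 1) := by
  set R := numRej n αc q ω with hR
  set Rj := numRej n αc (Function.update q j fun _ => 0) ω with hRj
  have hRj1 : 1 ≤ Rj := one_le_numRej_update hn hpos j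
  obtain ⟨hRjmem, hRjcnt⟩ := numRej_spec (show Rj ≠ 0 by omega)
  have hRjn : Rj ≤ n := (Finset.mem_Icc.1 hRjmem).2
  have hRRj : R ≤ Rj := numRej_le_update hpos hmono j
  have hRn : R ≤ n := numRej_le
  have hαRj : (0:ℝ) ≤ αc Rj := le_trans hpos.le (hmono 1 Rj le_rfl hRj1 hRjn)
  have hback : q j ω ≤ αc Rj → Rj = max R 1 ∧ q j ω ≤ αc (max R 1) := by
    intro hja
    have hcnt' : Rj ≤ (Finset.univ.filter fun k => q k ω ≤ αc Rj).card := by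
      rwa [cnt_update_eq hαRj hja] at hRjcnt
    have hRjR : Rj ≤ R := le_numRej hRjmem hcnt'
    have hReq : R = Rj := le_antisymm hRRj hRjR
    have hmax : max R 1 = R := max_eq_left (hReq ▸ hRj1)
    rw [hmax, hReq]
    exact ⟨rfl, hja⟩
  have hfwd : q j ω ≤ αc (max R 1) → q j ω ≤ αc Rj := by
    intro h
    have hR1 : 1 ≤ R := by
      by_contra hc
      have hR0 : max R 1 = 1 := by omega
      rw [hR0] at h
      have hcard : 1 ≤ (Finset.univ.filter fun k => q k ω ≤ αc 1).card :=
        Finset.card_pos.2 ⟨j, Finset.mem_filter.2 ⟨Finset.mem_univ _, h⟩⟩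
      have := le_numRej (Finset.mem_Icc.2 ⟨le_rfl, hn⟩) hcard
      omega
    rw [max_eq_left hR1] at h
    by_contra hc
    push_neg at hc
    have : αc R ≤ αc Rj := hmono R Rj hR1 hRRj hRjn
    linarith
  exact ⟨⟨hfwd, fun h => (hback h).2⟩, fun h => (hback h).1⟩

end det

lemma measurable_numRej {Ω ι : Type*} [Fintype ι] {m : MeasurableSpace Ω}
    (n : ℕ) (αc : ℕ → ℝ) (q : ι → Ω → ℝ) (hq : ∀ j, Measurable (q j)) :
    Measurable (numRej n αc q) := by
  have heq : numRej n αc q = fun ω => (Finset.Icc 1 n).sup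
      (fun i => if i ≤ (Finset.univ.filter fun j => q j ω ≤ αc i).card then i else 0) :=
    funext fun ω => by unfold numRej; exact filter_sup_id _ _
  rw [heq]
  refine measurable_finset_sup _ _ fun i => ?_
  have hc := measurable_cnt (αc i) q hq
  have hset : MeasurableSet {ω | i ≤ (Finset.univ.filter fun j => q j ω ≤ αc i).card} :=
    hc (by trivial : MeasurableSet {k : ℕ | i ≤ k})
  exact Measurable.ite hset measurable_const measurable_const

lemma indep_combine {Ω : Type*} {mΩ : MeasurableSpace Ω} {μ : Measure Ω} [IsProbabilityMeasure μ]
    {A B C : MeasurableSpace Ω} (hA : A ≤ mΩ) (hB : B ≤ mΩ) (hC : C ≤ mΩ)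
    (hAB : Indep A B μ) (hABC : Indep (A ⊔ B) C μ) : Indep A (B ⊔ C) μ := by
  rw [Indep_iff] at hAB hABC
  set p1 : Set (Set Ω) := {s | MeasurableSet[A] s} with hp1
  set p2 : Set (Set Ω) := {s | ∃ b c, MeasurableSet[B] b ∧ MeasurableSet[C] c ∧ s = b ∩ c}
    with hp2
  have hgen1 : A = MeasurableSpace.generateFrom p1 :=
    (@MeasurableSpace.generateFrom_measurableSet Ω A).symm
  have hgen2 : B ⊔ C = MeasurableSpace.generateFrom p2 := by
    apply le_antisymm
    · refine sup_le ?_ ?_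
      · intro s hs
        exact MeasurableSpace.measurableSet_generateFrom
          ⟨s, Set.univ, hs, MeasurableSet.univ, (Set.inter_univ s).symm⟩
      · intro s hs
        exact MeasurableSpace.measurableSet_generateFrom
          ⟨Set.univ, s, MeasurableSet.univ, hs, (Set.univ_inter s).symm⟩
    · apply MeasurableSpace.generateFrom_le
      rintro s ⟨b, c, hb, hc, rfl⟩
      exact ((le_sup_left : B ≤ B ⊔ C) _ hb).inter ((le_sup_right : C ≤ B ⊔ C) _ hc)
  have hpi1 : IsPiSystem p1 := fun s hs t ht _ => MeasurableSet.inter hs ht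
  have hpi2 : IsPiSystem p2 := by
    rintro s ⟨b1, c1, hb1, hc1, rfl⟩ t ⟨b2, c2, hb2, hc2, rfl⟩ _
    refine ⟨b1 ∩ b2, c1 ∩ c2, hb1.inter hb2, hc1.inter hc2, ?_⟩
    ext x; simp only [Set.mem_inter_iff]; tauto
  refine ProbabilityTheory.IndepSets.indep hA (sup_le hB hC) hpi1 hpi2 hgen1 hgen2 ?_
  rw [IndepSets_iff]
  rintro a s ha ⟨b, c, hb, hc, rfl⟩
  have hab : MeasurableSet[A ⊔ B] (a ∩ b) :=
    ((le_sup_left : A ≤ A ⊔ B) _ ha).inter ((le_sup_right : B ≤ A ⊔ B) _ hb)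
  calc μ (a ∩ (b ∩ c)) = μ ((a ∩ b) ∩ c) := by rw [Set.inter_assoc]
  _ = μ (a ∩ b) * μ c := hABC _ _ hab hc
  _ = μ a * μ b * μ c := by rw [hAB a b ha hb]
  _ = μ a * (μ b * μ c) := mul_assoc _ _ _
  _ = μ a * μ (b ∩ c) := by rw [hABC b c ((le_sup_right : B ≤ A ⊔ B) _ hb) hc]

/-- Key identity for the BI model: with `γ(i) = n·α_{i:n}` (and `γ(0) = n·α_{1:n}`),
the step-up test satisfies `E(V/γ(R)) = n₀/n`. -/
theorem expectation_V_div_gamma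
    {Ω : Type} [MeasurableSpace Ω] (μ : Measure Ω) [IsProbabilityMeasure μ]
    (n n₀ : ℕ) (hn : 0 < n) (hn₀ : n₀ ≤ n)
    (q : Fin n → Ω → ℝ) (hq : ∀ j, Measurable (q j))
    (T : Finset (Fin n)) (hT : T.card = n₀)
    (αc : ℕ → ℝ) (hpos : 0 < αc 1) (hlt : αc n < 1)
    (hmono : ∀ i j, 1 ≤ i → i ≤ j → j ≤ n → αc i ≤ αc j)
    (hunif : ∀ i ∈ T, μ.map (q i) = volume.restrict (Set.Ioo 0 1))
    (hiid : iIndepFun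
      (fun i : {j : Fin n // j ∈ T} => q i) μ)
    (hindep : IndepFun (fun ω (i : {j : Fin n // j ∈ T}) => q i ω)
      (fun ω (j : {j : Fin n // j ∉ T}) => q j ω) μ) :
    ∫ ω, (numFalseRej n αc q T ω : ℝ) / ((n : ℝ) * αc (max (numRej n αc q ω) 1)) ∂μ
      = (n₀ : ℝ) / n := by
  classical
  have hα : ∀ r, r ∈ Finset.Icc 1 n → 0 < αc r ∧ αc r < 1 := by
    intro r hr
    rcases Finset.mem_Icc.1 hr with ⟨h1, h2⟩
    exact ⟨lt_of_lt_of_le hpos (hmono 1 r le_rfl h1 h2),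
      lt_of_le_of_lt (hmono r n h1 h2 le_rfl) hlt⟩
  have hupdmeas : ∀ j k : Fin n, Measurable (Function.update q j (fun _ => 0) k) := by
    intro j k
    rcases eq_or_ne k j with rfl | h
    · simp only [Function.update_self]; exact measurable_const
    · rw [Function.update_of_ne h]; exact hq k
  have hRjmeas : ∀ j, Measurable (numRej n αc (Function.update q j fun _ => 0)) :=
    fun j => measurable_numRej n αc _ (hupdmeas j)
  have hRjmem : ∀ (j : Fin n) (ω : Ω),
      numRej n αc (Function.update q j fun _ => 0) ω ∈ Finset.Icc 1 n :=
    fun j ω => Finset.mem_Icc.2 ⟨one_le_numRej_update hn hpos j, numRej_le⟩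
  have hsets : ∀ (j : Fin n) (r : ℕ), MeasurableSet
      ((q j ⁻¹' Set.Iic (αc r)) ∩ (numRej n αc (Function.update q j fun _ => 0) ⁻¹' {r})) :=
    fun j r => ((hq j) measurableSet_Iic).inter ((hRjmeas j) (measurableSet_singleton r))
  -- pointwise identity
  have hpt : ∀ ω, (numFalseRej n αc q T ω : ℝ) / ((n : ℝ) * αc (max (numRej n αc q ω) 1))
      = ∑ j ∈ T, ∑ r ∈ Finset.Icc 1 n,
        Set.indicator ((q j ⁻¹' Set.Iic (αc r)) ∩
          (numRej n αc (Function.update q j fun _ => 0) ⁻¹' {r}))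
          (fun _ => ((n : ℝ) * αc r)⁻¹) ω := by
    intro ω
    have hLHS : (numFalseRej n αc q T ω : ℝ) / ((n : ℝ) * αc (max (numRej n αc q ω) 1))
        = ∑ j ∈ T, (if q j ω ≤ αc (max (numRej n αc q ω) 1)
            then ((n : ℝ) * αc (max (numRej n αc q ω) 1))⁻¹ else 0) := by
      simp only [numFalseRej, Finset.card_filter]
      rw [div_eq_mul_inv, Nat.cast_sum, Finset.sum_mul]
      refine Finset.sum_congr rfl fun j _ => ?_
      by_cases hP : q j ω ≤ αc (max (numRej n αc q ω) 1) <;> simp [hP]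
    rw [hLHS]
    refine Finset.sum_congr rfl fun j _ => ?_
    have hmem := hRjmem j ω
    have h0 : ∀ r ∈ Finset.Icc 1 n, r ≠ numRej n αc (Function.update q j fun _ => 0) ω →
        Set.indicator ((q j ⁻¹' Set.Iic (αc r)) ∩
          (numRej n αc (Function.update q j fun _ => 0) ⁻¹' {r}))
          (fun _ => ((n : ℝ) * αc r)⁻¹) ω = 0 := by
      intro r _ hne
      apply Set.indicator_of_notMem
      intro hc
      exact hne hc.2.symm
    rw [Finset.sum_eq_single_of_mem _ hmem h0]
    have hind : Set.indicator ((q j ⁻¹' Set.Iic (αc (numRej n αc (Function.update q j fun _ => 0) ω))) ∩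
          (numRej n αc (Function.update q j fun _ => 0) ⁻¹'
            {numRej n αc (Function.update q j fun _ => 0) ω}))
          (fun _ => ((n : ℝ) * αc (numRej n αc (Function.update q j fun _ => 0) ω))⁻¹) ω
        = if q j ω ≤ αc (numRej n αc (Function.update q j fun _ => 0) ω)
            then ((n : ℝ) * αc (numRej n αc (Function.update q j fun _ => 0) ω))⁻¹ else 0 := by
      rw [Set.indicator_apply]
      congr 1
      simp [Set.mem_inter_iff]
    rw [hind]
    obtain ⟨hiff, heq⟩ := key_update (q := q) (ω := ω) hn hpos hmono j
    by_cases h : q j ω ≤ αc (max (numRej n αc q ω) 1)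
    · have h2 := hiff.1 h
      rw [if_pos h, if_pos h2, heq h2]
    · have h2 : ¬ q j ω ≤ αc (numRej n αc (Function.update q j fun _ => 0) ω) :=
        fun hh => h (hiff.2 hh)
      rw [if_neg h, if_neg h2]
  -- the key per-j integral identity
  have hkey : ∀ j ∈ T, ∑ r ∈ Finset.Icc 1 n,
      (μ ((q j ⁻¹' Set.Iic (αc r)) ∩
        (numRej n αc (Function.update q j fun _ => 0) ⁻¹' {r}))).toReal • ((n : ℝ) * αc r)⁻¹
      = (n : ℝ)⁻¹ := by
    intro j hjT
    -- independence of q j and the σ-algebra generated by the other coordinates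
    have hAle : MeasurableSpace.comap (q j) inferInstance ≤ _ := (hq j).comap_le
    have hBle : (⨆ i ∈ ({(⟨j, hjT⟩ : {k : Fin n // k ∈ T})}ᶜ : Set {k : Fin n // k ∈ T}),
        MeasurableSpace.comap (q i.1) inferInstance) ≤ _ :=
      iSup₂_le fun i _ => (hq i.1).comap_le
    have hCle : (⨆ i : {k : Fin n // k ∉ T},
        MeasurableSpace.comap (q i.1) inferInstance) ≤ _ :=
      iSup_le fun i => (hq i.1).comap_le
    have hiid' : iIndep (fun i : {k : Fin n // k ∈ T} =>
        MeasurableSpace.comap (q i.1) inferInstance) μ :=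
      (iIndepFun_iff_iIndep _ _ _).1 hiid
    have hAB : Indep (MeasurableSpace.comap (q j) inferInstance)
        (⨆ i ∈ ({(⟨j, hjT⟩ : {k : Fin n // k ∈ T})}ᶜ : Set {k : Fin n // k ∈ T}),
          MeasurableSpace.comap (q i.1) inferInstance) μ := by
      have h := indep_iSup_of_disjoint (fun i : {k : Fin n // k ∈ T} => (hq i.1).comap_le)
        hiid' (disjoint_compl_right (a := ({⟨j, hjT⟩} : Set {k : Fin n // k ∈ T})))
      exact indep_of_indep_of_le_left h
        (le_biSup (fun i : {k : Fin n // k ∈ T} =>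
          MeasurableSpace.comap (q i.1) inferInstance)
          (Set.mem_singleton (⟨j, hjT⟩ : {k : Fin n // k ∈ T})))
    have hMT : MeasurableSpace.comap (fun ω (i : {k : Fin n // k ∈ T}) => q i.1 ω)
          MeasurableSpace.pi
        = ⨆ i : {k : Fin n // k ∈ T}, MeasurableSpace.comap (q i.1) inferInstance := by
      rw [show (MeasurableSpace.pi : MeasurableSpace ({k : Fin n // k ∈ T} → ℝ))
          = ⨆ i, MeasurableSpace.comap (fun g => g i) inferInstance from rfl,
        MeasurableSpace.comap_iSup]
      simp only [MeasurableSpace.comap_comp]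
      rfl
    have hMF : MeasurableSpace.comap (fun ω (i : {k : Fin n // k ∉ T}) => q i.1 ω)
          MeasurableSpace.pi
        = ⨆ i : {k : Fin n // k ∉ T}, MeasurableSpace.comap (q i.1) inferInstance := by
      rw [show (MeasurableSpace.pi : MeasurableSpace ({k : Fin n // k ∉ T} → ℝ))
          = ⨆ i, MeasurableSpace.comap (fun g => g i) inferInstance from rfl,
        MeasurableSpace.comap_iSup]
      simp only [MeasurableSpace.comap_comp]
      rfl
    have hABC : Indep (MeasurableSpace.comap (q j) inferInstance ⊔
        (⨆ i ∈ ({(⟨j, hjT⟩ : {k : Fin n // k ∈ T})}ᶜ : Set {k : Fin n // k ∈ T}),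
          MeasurableSpace.comap (q i.1) inferInstance))
        (⨆ i : {k : Fin n // k ∉ T}, MeasurableSpace.comap (q i.1) inferInstance) μ := by
      have h2 : Indep (⨆ i : {k : Fin n // k ∈ T},
          MeasurableSpace.comap (q i.1) inferInstance)
          (⨆ i : {k : Fin n // k ∉ T}, MeasurableSpace.comap (q i.1) inferInstance) μ := by
        rw [← hMT, ← hMF]; exact hindep
      refine indep_of_indep_of_le_left h2 ?_
      refine sup_le ?_ (iSup₂_le fun i _ => le_iSup (fun i : {k : Fin n // k ∈ T} =>
        MeasurableSpace.comap (q i.1) inferInstance) i)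
      exact le_iSup (fun i : {k : Fin n // k ∈ T} =>
        MeasurableSpace.comap (q i.1) inferInstance) ⟨j, hjT⟩
    have hAS : Indep (MeasurableSpace.comap (q j) inferInstance)
        (⨆ k ∈ ({j}ᶜ : Set (Fin n)), MeasurableSpace.comap (q k) inferInstance) μ := by
      refine indep_of_indep_of_le_right (indep_combine hAle hBle hCle hAB hABC) ?_
      refine iSup₂_le fun k hk => ?_
      have hkj : k ≠ j := hk
      by_cases hkT : k ∈ T
      · refine le_trans ?_ le_sup_left
        exact le_biSup (fun i : {k : Fin n // k ∈ T} =>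
          MeasurableSpace.comap (q i.1) inferInstance)
          (show (⟨k, hkT⟩ : {k : Fin n // k ∈ T}) ∈
            ({(⟨j, hjT⟩ : {k : Fin n // k ∈ T})}ᶜ : Set {k : Fin n // k ∈ T}) by
            simp only [Set.mem_compl_iff, Set.mem_singleton_iff]
            intro hEq
            exact hkj (congrArg Subtype.val hEq))
      · exact le_trans (le_iSup (fun i : {k : Fin n // k ∉ T} =>
          MeasurableSpace.comap (q i.1) inferInstance) ⟨k, hkT⟩) le_sup_right
    rw [Indep_iff] at hAS
    have hRjS : Measurable[⨆ k ∈ ({j}ᶜ : Set (Fin n)),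
        MeasurableSpace.comap (q k) inferInstance]
        (numRej n αc (Function.update q j fun _ => 0)) := by
      apply measurable_numRej
      intro k
      rcases eq_or_ne k j with rfl | hkj
      · simp only [Function.update_self]; exact measurable_const
      · rw [Function.update_of_ne hkj]
        exact Measurable.of_comap_le (le_biSup (fun k : Fin n =>
          MeasurableSpace.comap (q k) inferInstance)
          (show k ∈ ({j}ᶜ : Set (Fin n)) from hkj))
    have hμF : ∀ r ∈ Finset.Icc 1 n,
        μ (q j ⁻¹' Set.Iic (αc r)) = ENNReal.ofReal (αc r) := by
      intro r hr
      obtain ⟨h0, h1⟩ := hα r hr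
      have hIio : Set.Iic (αc r) ∩ Set.Ioo 0 1 = Set.Ioc 0 (αc r) := by
        ext x
        simp only [Set.mem_inter_iff, Set.mem_Iic, Set.mem_Ioo, Set.mem_Ioc]
        constructor
        · rintro ⟨ha, hb, _⟩; exact ⟨hb, ha⟩
        · rintro ⟨ha, hb⟩; exact ⟨hb, ha, lt_of_le_of_lt hb h1⟩
      rw [← Measure.map_apply (hq j) measurableSet_Iic, hunif j hjT,
        Measure.restrict_apply measurableSet_Iic, hIio, Real.volume_Ioc]
      simp
    have hprod : ∀ r ∈ Finset.Icc 1 n,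
        μ ((q j ⁻¹' Set.Iic (αc r)) ∩
          (numRej n αc (Function.update q j fun _ => 0) ⁻¹' {r}))
        = ENNReal.ofReal (αc r) *
          μ (numRej n αc (Function.update q j fun _ => 0) ⁻¹' {r}) := by
      intro r hr
      rw [hAS _ _ ⟨Set.Iic (αc r), measurableSet_Iic, rfl⟩
        (hRjS (measurableSet_singleton r)), hμF r hr]
    have hterm : ∀ r ∈ Finset.Icc 1 n,
        (μ ((q j ⁻¹' Set.Iic (αc r)) ∩
          (numRej n αc (Function.update q j fun _ => 0) ⁻¹' {r}))).toReal
          • ((n : ℝ) * αc r)⁻¹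
        = (μ (numRej n αc (Function.update q j fun _ => 0) ⁻¹' {r})).toReal * (n : ℝ)⁻¹ := by
      intro r hr
      obtain ⟨h0, _⟩ := hα r hr
      rw [hprod r hr, ENNReal.toReal_mul, ENNReal.toReal_ofReal h0.le, smul_eq_mul, mul_inv]
      field_simp
    rw [Finset.sum_congr rfl hterm, ← Finset.sum_mul]
    have hsum : ∑ r ∈ Finset.Icc 1 n,
        μ (numRej n αc (Function.update q j fun _ => 0) ⁻¹' {r}) = 1 := by
      rw [sum_measure_preimage_singleton _
        (fun r _ => (hRjmeas j) (measurableSet_singleton r))]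
      have : (numRej n αc (Function.update q j fun _ => 0)) ⁻¹'
          ↑(Finset.Icc 1 n) = Set.univ := by
        ext ω
        simp only [Set.mem_preimage, Finset.coe_Icc, Set.mem_Icc, Set.mem_univ, iff_true]
        exact Finset.mem_Icc.1 (hRjmem j ω)
      rw [this, measure_univ]
    have : ∑ r ∈ Finset.Icc 1 n,
        (μ (numRej n αc (Function.update q j fun _ => 0) ⁻¹' {r})).toReal = 1 := by
      rw [← ENNReal.toReal_sum (fun r _ => measure_ne_top μ _), hsum, ENNReal.toReal_one]
    rw [this, one_mul]
  -- put it together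
  calc ∫ ω, (numFalseRej n αc q T ω : ℝ) / ((n : ℝ) * αc (max (numRej n αc q ω) 1)) ∂μ
      = ∫ ω, (∑ j ∈ T, ∑ r ∈ Finset.Icc 1 n,
          Set.indicator ((q j ⁻¹' Set.Iic (αc r)) ∩
            (numRej n αc (Function.update q j fun _ => 0) ⁻¹' {r}))
            (fun _ => ((n : ℝ) * αc r)⁻¹) ω) ∂μ := by
        exact integral_congr_ae (Filter.Eventually.of_forall hpt)
  _ = ∑ j ∈ T, ∑ r ∈ Finset.Icc 1 n,
        (μ ((q j ⁻¹' Set.Iic (αc r)) ∩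
          (numRej n αc (Function.update q j fun _ => 0) ⁻¹' {r}))).toReal
          • ((n : ℝ) * αc r)⁻¹ := by
        rw [integral_finset_sum _ (fun j _ => integrable_finset_sum _
          (fun r _ => (integrable_const _).indicator (hsets j r)))]
        refine Finset.sum_congr rfl fun j _ => ?_
        rw [integral_finset_sum _ (fun r _ => (integrable_const _).indicator (hsets j r))]
        exact Finset.sum_congr rfl fun r _ => integral_indicator_const _ (hsets j r)
  _ = ∑ j ∈ T, (n : ℝ)⁻¹ := Finset.sum_congr rfl hkey
  _ = (n₀ : ℝ) / n := by
        rw [Finset.sum_const, hT, nsmul_eq_mul, div_eq_mul_inv]
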